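/- Let n ≥ 3 and 3 ≤ t ≤ n. Then dyn_t(K_{1,n} □ K_{1,n}) = n², i.e., equality holds in the product bound dyn_t(G □ H) ≤ dyn_t(G)·dyn_t(H) since dyn_t(K_{1,n}) = n. -/

import Mathlib

open SimpleGraph

/-- One step of the activation process: add every vertex having at least `τ v` active neighbors. -/
def activStep {V : Type*} (G : SimpleGraph V) (τ : V → ℕ) (A : Set V) : Set V :=
  A ∪ {v | τ v ≤ (G.neighborSet v ∩ A).ncard}

/-- `D` is a `τ`-dynamic monopoly: iterating the activation process from `D` activates all of `V`. -/
def IsDynMonopoly {V : Type*} (G : SimpleGraph V) (τ : V → ℕ) (D : Set V) : Prop :=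
  ∃ k : ℕ, (activStep G τ)^[k] D = Set.univ

/-- The `τ`-dynamic monopoly number: least cardinality of a `τ`-dynamic monopoly. -/
noncomputable def dynNum {V : Type*} (G : SimpleGraph V) (τ : V → ℕ) : ℕ :=
  sInf {k | ∃ D : Set V, IsDynMonopoly G τ D ∧ D.ncard = k}

/-- Dynamic monopoly number with constant threshold `t`. -/
noncomputable def dynNumC {V : Type*} (G : SimpleGraph V) (t : ℕ) : ℕ :=
  dynNum G (fun _ => t)
section Aux

variable {V : Type*} {α : Type*}

lemma aux_ncard_range [Fintype α] (f : α → V) (hf : Function.Injective f) :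
    (Set.range f).ncard = Fintype.card α := by
  rw [← Set.image_univ, Set.ncard_image_of_injective _ hf, Set.ncard_univ,
    Nat.card_eq_fintype_card]

lemma aux_le_ncard [Finite V] [Fintype α] {S : Set V} (f : α → V) (hf : Function.Injective f)
    (hS : ∀ i, f i ∈ S) : Fintype.card α ≤ S.ncard := by
  have h := Set.ncard_le_ncard (Set.range_subset_iff.2 hS) S.toFinite
  rwa [aux_ncard_range f hf] at h

lemma aux_le_ncard_fin [Finite V] {m : ℕ} {S : Set V} (f : Fin m → V)
    (hf : Function.Injective f) (hS : ∀ i, f i ∈ S) : m ≤ S.ncard := by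
  simpa using aux_le_ncard f hf hS

/-- A vertex of degree below its threshold is never activated. -/
lemma aux_never_active [Finite V] (G : SimpleGraph V) (τ : V → ℕ) (D : Set V) (v : V)
    (hv : (G.neighborSet v).ncard < τ v) (hvD : v ∉ D) (k : ℕ) :
    v ∉ (activStep G τ)^[k] D := by
  induction k with
  | zero => simpa using hvD
  | succ k ih =>
    rw [Function.iterate_succ_apply']
    rintro (h | h)
    · exact ih h
    · have : (G.neighborSet v ∩ (activStep G τ)^[k] D).ncard ≤ (G.neighborSet v).ncard :=
        Set.ncard_le_ncard Set.inter_subset_left (G.neighborSet v).toFinite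
      exact absurd (le_trans h this) (not_le.2 hv)

end Aux

/-- For `n ≥ 3` and `3 ≤ t ≤ n`, `dyn_t(K_{1,n} □ K_{1,n}) = n²`, so equality holds in the
product bound since `dyn_t(K_{1,n}) = n`. -/
theorem dyn_star_boxProd_star (n t : ℕ) (hn : 3 ≤ n) (ht : 3 ≤ t) (htn : t ≤ n) :
    dynNumC ((completeBipartiteGraph (Fin 1) (Fin n)).boxProd
        (completeBipartiteGraph (Fin 1) (Fin n))) t = n ^ 2 ∧
    dynNumC (completeBipartiteGraph (Fin 1) (Fin n)) t = n := by
  have h3t : 3 ≤ t := ht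
  constructor
  · -- box product case
    set G := (completeBipartiteGraph (Fin 1) (Fin n)).boxProd
        (completeBipartiteGraph (Fin 1) (Fin n)) with hG
    set f : Fin n × Fin n → (Fin 1 ⊕ Fin n) × (Fin 1 ⊕ Fin n) :=
      fun p => (Sum.inr p.1, Sum.inr p.2) with hf
    have hfinj : Function.Injective f := by
      intro p q h
      simp only [hf, Prod.mk.injEq, Sum.inr.injEq] at h
      exact Prod.ext h.1 h.2
    set D : Set ((Fin 1 ⊕ Fin n) × (Fin 1 ⊕ Fin n)) := Set.range f with hD
    have hDcard : D.ncard = n ^ 2 := by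
      rw [hD, aux_ncard_range f hfinj]
      simp [sq]
    -- step 1: everything with a right coordinate becomes active
    have h1 : ∀ p : (Fin 1 ⊕ Fin n) × (Fin 1 ⊕ Fin n), p.1.isRight ∨ p.2.isRight →
        p ∈ activStep G (fun _ => t) D := by
      rintro ⟨a, b⟩ (hr | hr)
      · obtain ⟨i, rfl⟩ := Sum.isRight_iff.1 hr
        cases b with
        | inr j => exact Set.mem_union_left _ ⟨(i, j), rfl⟩
        | inl x =>
          right
          refine le_trans htn ?_
          refine aux_le_ncard_fin (fun k => (Sum.inr i, Sum.inr k)) ?_ ?_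
          · intro y z h; simpa using h
          · intro k
            constructor
            · show G.Adj _ _
              rw [hG, boxProd_adj]
              right
              exact ⟨by simp, rfl⟩
            · exact ⟨(i, k), rfl⟩
      · obtain ⟨j, rfl⟩ := Sum.isRight_iff.1 hr
        cases a with
        | inr i => exact Set.mem_union_left _ ⟨(i, j), rfl⟩
        | inl x =>
          right
          refine le_trans htn ?_
          refine aux_le_ncard_fin (fun k => (Sum.inr k, Sum.inr j)) ?_ ?_
          · intro y z h; simpa using h
          · intro k
            constructor
            · show G.Adj _ _
              rw [hG, boxProd_adj]
              left
              exact ⟨by simp, rfl⟩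
            · exact ⟨(k, j), rfl⟩
    have hmono : IsDynMonopoly G (fun _ => t) D := by
      refine ⟨2, ?_⟩
      show activStep G (fun _ => t) (activStep G (fun _ => t) D) = Set.univ
      ext ⟨a, b⟩
      simp only [Set.mem_univ, iff_true]
      by_cases hab : a.isRight ∨ b.isRight
      · exact Set.mem_union_left _ (h1 _ hab)
      · push_neg at hab
        obtain ⟨i, rfl⟩ := Sum.isLeft_iff.1 (Sum.not_isRight.1 hab.1)
        obtain ⟨j, rfl⟩ := Sum.isLeft_iff.1 (Sum.not_isRight.1 hab.2)
        right
        refine le_trans htn ?_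
        refine aux_le_ncard_fin (fun k => (Sum.inr k, Sum.inl j)) ?_ ?_
        · intro x y h; simpa using h
        · intro k
          constructor
          · show G.Adj _ _
            rw [hG, boxProd_adj]
            left
            exact ⟨by simp, rfl⟩
          · exact h1 _ (Or.inl rfl)
    have hmem : n ^ 2 ∈ {k | ∃ D : Set ((Fin 1 ⊕ Fin n) × (Fin 1 ⊕ Fin n)),
        IsDynMonopoly G (fun _ => t) D ∧ D.ncard = k} :=
      ⟨D, hmono, hDcard⟩
    refine le_antisymm (Nat.sInf_le hmem) (le_csInf ⟨_, hmem⟩ ?_)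
    rintro k ⟨E, ⟨m, hm⟩, rfl⟩
    -- every leaf-leaf vertex has degree 2 < t, so must be in E
    have hlow : ∀ p : Fin n × Fin n, f p ∈ E := by
      intro ⟨i, j⟩
      by_contra hpe
      have hdeg : (G.neighborSet (f (i, j))).ncard < t := by
        have hsub : G.neighborSet (f (i, j)) ⊆
            {((Sum.inl 0, Sum.inr j) : (Fin 1 ⊕ Fin n) × (Fin 1 ⊕ Fin n)),
              (Sum.inr i, Sum.inl 0)} := by
          rintro ⟨a, b⟩ hw
          rw [mem_neighborSet, hG, boxProd_adj] at hw
          simp only [Set.mem_insert_iff, Set.mem_singleton_iff, Prod.mk.injEq]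
          rcases hw with ⟨ha, hb⟩ | ⟨ha, hb⟩
          · left
            rw [completeBipartiteGraph_adj] at ha
            rcases ha with ⟨h, _⟩ | ⟨_, h⟩
            · simp [hf] at h
            · obtain ⟨x, rfl⟩ := Sum.isLeft_iff.1 h
              exact ⟨by rw [Subsingleton.elim x 0], hb.symm⟩
          · right
            rw [completeBipartiteGraph_adj] at ha
            rcases ha with ⟨h, _⟩ | ⟨_, h⟩
            · simp [hf] at h
            · obtain ⟨x, rfl⟩ := Sum.isLeft_iff.1 h
              exact ⟨hb.symm, by rw [Subsingleton.elim x 0]⟩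
        calc (G.neighborSet (f (i, j))).ncard
            ≤ ({((Sum.inl 0, Sum.inr j) : (Fin 1 ⊕ Fin n) × (Fin 1 ⊕ Fin n)),
                (Sum.inr i, Sum.inl 0)} : Set ((Fin 1 ⊕ Fin n) × (Fin 1 ⊕ Fin n))).ncard :=
              Set.ncard_le_ncard hsub (Set.toFinite _)
          _ ≤ 2 := le_trans (Set.ncard_insert_le _ _) (by simp)
          _ < t := by omega
      have := aux_never_active G (fun _ => t) E (f (i, j)) hdeg hpe m
      rw [hm] at this
      exact this (Set.mem_univ _)
    calc n ^ 2 = Fintype.card (Fin n × Fin n) := by simp [sq]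
      _ ≤ E.ncard := aux_le_ncard f hfinj hlow
  · -- star case
    set G := completeBipartiteGraph (Fin 1) (Fin n) with hG
    set f : Fin n → Fin 1 ⊕ Fin n := fun k => Sum.inr k with hf
    have hfinj : Function.Injective f := fun x y h => Sum.inr_injective h
    set D : Set (Fin 1 ⊕ Fin n) := Set.range f with hD
    have hDcard : D.ncard = n := by rw [hD, aux_ncard_range f hfinj]; simp
    have hmono : IsDynMonopoly G (fun _ => t) D := by
      refine ⟨1, ?_⟩
      rw [Function.iterate_one]
      ext v
      simp only [Set.mem_univ, iff_true]
      cases v with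
      | inr j => exact Set.mem_union_left _ ⟨j, rfl⟩
      | inl i =>
        right
        refine le_trans htn ?_
        refine aux_le_ncard_fin f hfinj ?_
        intro k
        refine ⟨?_, ⟨k, rfl⟩⟩
        rw [mem_neighborSet, hG, completeBipartiteGraph_adj]
        exact Or.inl ⟨rfl, rfl⟩
    have hmem : n ∈ {k | ∃ D : Set (Fin 1 ⊕ Fin n),
        IsDynMonopoly G (fun _ => t) D ∧ D.ncard = k} :=
      ⟨D, hmono, hDcard⟩
    refine le_antisymm (Nat.sInf_le hmem) (le_csInf ⟨_, hmem⟩ ?_)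
    rintro k ⟨E, ⟨m, hm⟩, rfl⟩
    have hlow : ∀ j : Fin n, f j ∈ E := by
      intro j
      by_contra hpe
      have hdeg : (G.neighborSet (f j)).ncard < t := by
        have hsub : G.neighborSet (f j) ⊆ {(Sum.inl 0 : Fin 1 ⊕ Fin n)} := by
          intro w hw
          rw [mem_neighborSet, hG, completeBipartiteGraph_adj] at hw
          rcases hw with ⟨h, _⟩ | ⟨_, h⟩
          · simp [hf] at h
          · obtain ⟨x, rfl⟩ := Sum.isLeft_iff.1 h
            simp [Subsingleton.elim x 0]
        calc (G.neighborSet (f j)).ncard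
            ≤ ({(Sum.inl 0 : Fin 1 ⊕ Fin n)} : Set (Fin 1 ⊕ Fin n)).ncard :=
              Set.ncard_le_ncard hsub (Set.toFinite _)
          _ ≤ 1 := by simp
          _ < t := by omega
      have := aux_never_active G (fun _ => t) E (f j) hdeg hpe m
      rw [hm] at this
      exact this (Set.mem_univ _)
    calc n = Fintype.card (Fin n) := by simp
      _ ≤ E.ncard := aux_le_ncard f hfinj hlow
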